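/- Let (A[[ν]],⋆) be a formal deformation of A and suppose X = X0 + νX1 + ν²X2 + ⋯ ∈ A[[ν]] is central for ⋆, i.e. X⋆B = B⋆X for all B ∈ A[[ν]]. Then X0 ∈ Z(A); for every b ∈ A, {X0, b}_1 + [X1, b] = 0 (so (X0, X̄1) annihilates the Poisson module A); and for every Y0 ∈ Z(A) and Y1 ∈ A, {X0,Y0}_1 = 0 and {X0,Y0}_2 + {X1,Y0}_1 + {X0,Y1}_1 + [X1,Y1] = 0 (so (X0, X̄1) is a Casimir of the Poisson algebra Π(A)). -/

import Mathlib

open PowerSeries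

/-- A formal deformation `(A⟦ν⟧, ⋆)` of an associative unital `R`-algebra `A`:
an `R⟦ν⟧`-bilinear, associative, unital (with unit the constant series `1`)
multiplication `⋆` on the `R⟦ν⟧`-module `A⟦ν⟧`, such that `a ⋆ b ≡ a * b (mod ν·A⟦ν⟧)`
for all `a, b : A` (viewed as constant power series).  The `R⟦ν⟧`-module structure on
`A⟦ν⟧` is given by `c • P = (map (algebraMap R A) c) * P`. -/
structure FormalDeformation (R A : Type*) [CommRing R] [Ring A] [Algebra R A] where
  star : PowerSeries A → PowerSeries A → PowerSeries A
  add_star : ∀ P Q S, star (P + Q) S = star P S + star Q S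
  star_add : ∀ P Q S, star P (Q + S) = star P Q + star P S
  smul_star : ∀ (c : PowerSeries R) (P Q : PowerSeries A),
      star (PowerSeries.map (algebraMap R A) c * P) Q
        = PowerSeries.map (algebraMap R A) c * star P Q
  star_smul : ∀ (c : PowerSeries R) (P Q : PowerSeries A),
      star P (PowerSeries.map (algebraMap R A) c * Q)
        = PowerSeries.map (algebraMap R A) c * star P Q
  star_assoc : ∀ P Q S, star (star P Q) S = star P (star Q S)
  one_star : ∀ P, star 1 P = P
  star_one : ∀ P, star P 1 = P
  star_deform : ∀ a b : A,
      constantCoeff (star (C a) (C b)) = a * b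

namespace FormalDeformation

variable {R A : Type*} [CommRing R] [Ring A] [Algebra R A]

/-- `(a,b)ᵢ` : the coefficient of `νⁱ` in `a ⋆ b`, for `a b : A`. -/
noncomputable def prodCoeff (D : FormalDeformation R A) (i : ℕ) (a b : A) : A :=
  coeff i (D.star (C a) (C b))

/-- `{a,b}ᵢ` : the coefficient of `νⁱ` in `a ⋆ b − b ⋆ a`, for `a b : A`. -/
noncomputable def brkt (D : FormalDeformation R A) (i : ℕ) (a b : A) : A :=
  coeff i (D.star (C a) (C b) - D.star (C b) (C a))

end FormalDeformation


namespace FormalDeformation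

variable {R A : Type*} [CommRing R] [Ring A] [Algebra R A]

/-- Shift a power series down by one. -/
noncomputable def shift (P : PowerSeries A) : PowerSeries A := PowerSeries.mk fun p => coeff (p+1) P

lemma cc_shift (P : PowerSeries A) : constantCoeff (shift P) = coeff 1 P := by
  simp [shift, ← coeff_zero_eq_constantCoeff]

lemma c1_shift (P : PowerSeries A) : coeff 1 (shift P) = coeff 2 P := by
  simp [shift]

lemma X_star (D : FormalDeformation R A) (P Q : PowerSeries A) :
    D.star ((X : PowerSeries A) * P) Q = X * D.star P Q := by
  have h : (X : PowerSeries A) = PowerSeries.map (algebraMap R A) (X : PowerSeries R) := by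
    rw [PowerSeries.map_X]
  rw [h, D.smul_star]

lemma star_X (D : FormalDeformation R A) (P Q : PowerSeries A) :
    D.star P ((X : PowerSeries A) * Q) = X * D.star P Q := by
  have h : (X : PowerSeries A) = PowerSeries.map (algebraMap R A) (X : PowerSeries R) := by
    rw [PowerSeries.map_X]
  rw [h, D.star_smul]

lemma star_zero (D : FormalDeformation R A) (P : PowerSeries A) : D.star P 0 = 0 := by
  have h := D.star_add P 0 0
  rw [add_zero] at h
  exact (left_eq_add.mp h)

lemma zero_star (D : FormalDeformation R A) (P : PowerSeries A) : D.star 0 P = 0 := by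
  have h := D.add_star 0 0 P
  rw [add_zero] at h
  exact (left_eq_add.mp h)

lemma coeff_succ_left (D : FormalDeformation R A) (P Q : PowerSeries A) (n : ℕ) :
    coeff (n+1) (D.star P Q)
      = coeff n (D.star (shift P) Q)
        + coeff (n+1) (D.star (C (constantCoeff P)) Q) := by
  conv_lhs => rw [eq_X_mul_shift_add_const P]
  rw [D.add_star, map_add, X_star, coeff_succ_X_mul]
  rfl

lemma coeff_succ_right (D : FormalDeformation R A) (P Q : PowerSeries A) (n : ℕ) :
    coeff (n+1) (D.star P Q)
      = coeff n (D.star P (shift Q))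
        + coeff (n+1) (D.star P (C (constantCoeff Q))) := by
  conv_lhs => rw [eq_X_mul_shift_add_const Q]
  rw [D.star_add, map_add, star_X, coeff_succ_X_mul]
  rfl

lemma coeff_zero (D : FormalDeformation R A) (P Q : PowerSeries A) :
    constantCoeff (D.star P Q) = constantCoeff P * constantCoeff Q := by
  have h1 : constantCoeff (D.star P Q)
      = constantCoeff (D.star (C (constantCoeff P)) Q) := by
    conv_lhs => rw [eq_X_mul_shift_add_const P]
    rw [D.add_star, map_add]
    rw [X_star]
    simp
  have h2 : constantCoeff (D.star (C (constantCoeff P)) Q)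
      = constantCoeff (D.star (C (constantCoeff P)) (C (constantCoeff Q))) := by
    conv_lhs => rw [eq_X_mul_shift_add_const Q]
    rw [D.star_add, map_add]
    rw [star_X]
    simp
  rw [h1, h2, D.star_deform]

lemma coeff_one (D : FormalDeformation R A) (P Q : PowerSeries A) :
    coeff 1 (D.star P Q)
      = constantCoeff (shift P) * constantCoeff Q
        + constantCoeff (C (constantCoeff P)) * constantCoeff (shift Q)
        + coeff 1 (D.star (C (constantCoeff P)) (C (constantCoeff Q))) := by
  rw [show (1:ℕ) = 0 + 1 from rfl, coeff_succ_left, coeff_succ_right,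
    coeff_zero_eq_constantCoeff, coeff_zero, coeff_zero]
  abel

lemma coeff_two (D : FormalDeformation R A) (P Q : PowerSeries A) :
    coeff 2 (D.star P Q)
      = (coeff 2 P * constantCoeff Q
          + constantCoeff P * coeff 2 Q
          + coeff 1 P * coeff 1 Q)
        + coeff 1 (D.star (C (coeff 1 P)) (C (constantCoeff Q)))
        + coeff 1 (D.star (C (constantCoeff P)) (C (coeff 1 Q)))
        + coeff 2 (D.star (C (constantCoeff P)) (C (constantCoeff Q))) := by
  rw [show (2:ℕ) = 1 + 1 from rfl, coeff_succ_left, coeff_one D (shift P) Q,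
    show (1:ℕ) + 1 = 0 + 1 + 1 from rfl,
    coeff_succ_right D (C (constantCoeff P)) Q,
    coeff_one D (C (constantCoeff P)) (shift Q)]
  simp only [cc_shift, c1_shift, constantCoeff_C, coeff_C, one_ne_zero, if_false,
    zero_mul, zero_add]
  abel

end FormalDeformation

/-- `H_ν = Z(A) + ν·A⟦ν⟧` : the power series whose constant term is central in `A`. -/
def Hnu (A : Type*) [Ring A] : Set (PowerSeries A) :=
  {P | constantCoeff P ∈ Set.center A}

/-- if `Xs = X0 + νX1 + ⋯ ∈ A⟦ν⟧` is central for `⋆`, then `X0 ∈ Z(A)`;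
`(X0, X̄1)` annihilates the Poisson module `A` (i.e. `{X0,b}₁ + [X1,b] = 0` for all `b`);
and `(X0, X̄1)` is a Casimir of `Π(A)`: for all `Y0 ∈ Z(A)`, `Y1 ∈ A`, `{X0,Y0}₁ = 0` and
`{X0,Y0}₂ + {X1,Y0}₁ + {X0,Y1}₁ + [X1,Y1] = 0`. -/
theorem central_element_casimir {R A : Type*} [CommRing R] [Ring A] [Algebra R A]
    (D : FormalDeformation R A) (Xs : PowerSeries A)
    (hXs : ∀ B : PowerSeries A, D.star Xs B = D.star B Xs) :
    coeff 0 Xs ∈ Set.center A ∧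
    (∀ b : A, D.brkt 1 (coeff 0 Xs) b + (coeff 1 Xs * b - b * coeff 1 Xs) = 0) ∧
    (∀ Y0 Y1 : A, Y0 ∈ Set.center A →
      D.brkt 1 (coeff 0 Xs) Y0 = 0 ∧
      D.brkt 2 (coeff 0 Xs) Y0 + D.brkt 1 (coeff 1 Xs) Y0
        + D.brkt 1 (coeff 0 Xs) Y1
        + (coeff 1 Xs * Y1 - Y1 * coeff 1 Xs) = 0) := by
  classical
  have hcent : ∀ b : A, constantCoeff Xs * b = b * constantCoeff Xs := by
    intro b
    have h := congrArg (constantCoeff) (hXs (C b))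
    rw [FormalDeformation.coeff_zero, FormalDeformation.coeff_zero, constantCoeff_C] at h
    exact h
  have h1 : coeff 0 Xs ∈ Set.center A := by
    rw [coeff_zero_eq_constantCoeff]
    exact Semigroup.mem_center_iff.mpr fun g => (hcent g).symm
  have h2 : ∀ b : A, D.brkt 1 (coeff 0 Xs) b
      + (coeff 1 Xs * b - b * coeff 1 Xs) = 0 := by
    intro b
    have hL := FormalDeformation.coeff_one D Xs (C b)
    have hR := FormalDeformation.coeff_one D (C b) Xs
    simp only [FormalDeformation.cc_shift, constantCoeff_C, coeff_C, one_ne_zero, if_false,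
      mul_zero, zero_mul, add_zero, zero_add] at hL hR
    have h := congrArg (coeff 1) (hXs (C b))
    unfold FormalDeformation.brkt
    rw [map_sub]
    simp only [coeff_zero_eq_constantCoeff]
    calc coeff 1 (D.star (C (constantCoeff Xs)) (C b))
          - coeff 1 (D.star (C b) (C (constantCoeff Xs)))
          + (coeff 1 Xs * b - b * coeff 1 Xs)
        = (coeff 1 Xs * b + coeff 1 (D.star (C (constantCoeff Xs)) (C b)))
          - (b * coeff 1 Xs
              + coeff 1 (D.star (C b) (C (constantCoeff Xs)))) := by abel
      _ = coeff 1 (D.star Xs (C b)) - coeff 1 (D.star (C b) Xs) := by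
            rw [← hL, ← hR]
      _ = 0 := by rw [h, sub_self]
  refine ⟨h1, h2, ?_⟩
  intro Y0 Y1 hY0
  have hY0c : ∀ g : A, g * Y0 = Y0 * g := fun g => Semigroup.mem_center_iff.mp hY0 g
  have hb1 : D.brkt 1 (coeff 0 Xs) Y0 = 0 := by
    have h := h2 Y0
    rw [hY0c (coeff 1 Xs), sub_self, add_zero] at h
    exact h
  refine ⟨hb1, ?_⟩
  have h3 : D.brkt 2 (coeff 0 Xs) Y0 + D.brkt 1 (coeff 1 Xs) Y0 = 0 := by
    have hL := FormalDeformation.coeff_two D Xs (C Y0)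
    have hR := FormalDeformation.coeff_two D (C Y0) Xs
    simp only [constantCoeff_C, coeff_C, one_ne_zero, if_false, OfNat.ofNat_ne_zero,
      mul_zero, zero_mul, add_zero, zero_add, map_zero, FormalDeformation.star_zero,
      FormalDeformation.zero_star] at hL hR
    have h := congrArg (coeff 2) (hXs (C Y0))
    unfold FormalDeformation.brkt
    rw [map_sub, map_sub]
    simp only [coeff_zero_eq_constantCoeff]
    calc coeff 2 (D.star (C (constantCoeff Xs)) (C Y0))
          - coeff 2 (D.star (C Y0) (C (constantCoeff Xs)))
          + (coeff 1 (D.star (C (coeff 1 Xs)) (C Y0))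
              - coeff 1 (D.star (C Y0) (C (coeff 1 Xs))))
        = (coeff 2 Xs * Y0
              + coeff 1 (D.star (C (coeff 1 Xs)) (C Y0))
              + coeff 2 (D.star (C (constantCoeff Xs)) (C Y0)))
          - (Y0 * coeff 2 Xs
              + coeff 1 (D.star (C Y0) (C (coeff 1 Xs)))
              + coeff 2 (D.star (C Y0) (C (constantCoeff Xs))))
          + (Y0 * coeff 2 Xs - coeff 2 Xs * Y0) := by abel
      _ = coeff 2 (D.star Xs (C Y0)) - coeff 2 (D.star (C Y0) Xs)
          + (Y0 * coeff 2 Xs - coeff 2 Xs * Y0) := by rw [← hL, ← hR]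
      _ = 0 := by rw [h, sub_self, zero_add, ← hY0c (coeff 2 Xs), sub_self]
  have h4 := h2 Y1
  calc D.brkt 2 (coeff 0 Xs) Y0 + D.brkt 1 (coeff 1 Xs) Y0
        + D.brkt 1 (coeff 0 Xs) Y1
        + (coeff 1 Xs * Y1 - Y1 * coeff 1 Xs)
      = (D.brkt 2 (coeff 0 Xs) Y0 + D.brkt 1 (coeff 1 Xs) Y0)
        + (D.brkt 1 (coeff 0 Xs) Y1
            + (coeff 1 Xs * Y1 - Y1 * coeff 1 Xs)) := by abel
    _ = 0 := by rw [h3, h4, add_zero]
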